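/- The set of real numbers satisfying condition (c) is dense in the interval [1, ∞); that is, for every real x ≥ 1 and every ε > 0 there exists a real b with |b − x| < ε such that b is a nonnegative algebraic integer and every complex root of the minimal polynomial of b over ℚ has modulus at most b. -/

import Mathlib

/-- Condition (c): `b` is a nonnegative real algebraic integer and every complex
root of its minimal polynomial over `ℚ` has modulus at most `b`. -/
def CondC (b : ℝ) : Prop :=
  0 ≤ b ∧ IsIntegral ℤ b ∧
    ∀ z ∈ ((minpoly ℚ b).map (algebraMap ℚ ℂ)).roots, ‖z‖ ≤ b

lemma aux_pow (x ε : ℝ) (hx : 1 ≤ x) (hε : 0 ≤ ε) :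
    ∀ n : ℕ, x ^ n + n * ε ≤ (x + ε) ^ n
  | 0 => by simp
  | (n + 1) => by
      have ih := aux_pow x ε hx hε n
      have h1 : (1:ℝ) ≤ x ^ n := one_le_pow₀ hx
      have hxn : (0:ℝ) ≤ (n:ℝ) := Nat.cast_nonneg n
      have hs : (x + ε) ^ (n + 1) = (x + ε) ^ n * (x + ε) := pow_succ _ _
      have hs2 : x ^ (n + 1) = x ^ n * x := pow_succ _ _
      have e1 : ε * 1 ≤ ε * x ^ n := mul_le_mul_of_nonneg_left h1 hε
      have e2 : (n:ℝ) * ε ≤ (n:ℝ) * ε * x := le_mul_of_one_le_right (by positivity) hx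
      have e3 : (0:ℝ) ≤ (n:ℝ) * ε * ε := by positivity
      have key : (x ^ n + (n:ℝ) * ε) * (x + ε) ≤ (x + ε) ^ n * (x + ε) :=
        mul_le_mul_of_nonneg_right ih (by linarith)
      rw [hs, hs2]
      push_cast
      nlinarith [e1, e2, e3, key]

theorem condC_dense (x : ℝ) (hx : 1 ≤ x) (ε : ℝ) (hε : 0 < ε) :
    ∃ b : ℝ, |b - x| < ε ∧ CondC b := by
  obtain ⟨n, hn1, hnε⟩ : ∃ n : ℕ, 1 ≤ n ∧ 1 < n * ε := by
    refine ⟨⌈1/ε⌉₊ + 1, Nat.le_add_left _ _, ?_⟩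
    have h1 : 1/ε < ((⌈1/ε⌉₊ + 1 : ℕ) : ℝ) := by
      push_cast
      have := Nat.le_ceil (1/ε)
      linarith
    calc (1:ℝ) = (1/ε) * ε := by field_simp
    _ < ((⌈1/ε⌉₊ + 1 : ℕ) : ℝ) * ε := by
        exact mul_lt_mul_of_pos_right h1 hε
  have hn0 : n ≠ 0 := by omega
  have hn0' : (n:ℝ) ≠ 0 := Nat.cast_ne_zero.mpr hn0
  set m : ℕ := ⌈x ^ n⌉₊ with hm
  have hxn1 : (1:ℝ) ≤ x ^ n := one_le_pow₀ hx
  have hmlb : x ^ n ≤ (m:ℝ) := Nat.le_ceil _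
  have hmub : (m:ℝ) < x ^ n + 1 := Nat.ceil_lt_add_one (by linarith)
  set b : ℝ := (m:ℝ) ^ ((n:ℝ)⁻¹) with hbdef
  have hm0 : (0:ℝ) ≤ (m:ℝ) := Nat.cast_nonneg m
  have hb0 : 0 ≤ b := Real.rpow_nonneg hm0 _
  have hbn : b ^ n = (m:ℝ) := by
    rw [hbdef, ← Real.rpow_natCast ((m:ℝ) ^ ((n:ℝ)⁻¹)) n, ← Real.rpow_mul hm0,
      inv_mul_cancel₀ hn0', Real.rpow_one]
  have hxb : x ≤ b := le_of_pow_le_pow_left₀ hn0 hb0 (by rw [hbn]; exact hmlb)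
  have hbu : b < x + ε := by
    have hlt : b ^ n < (x + ε) ^ n := by
      rw [hbn]
      calc (m:ℝ) < x ^ n + 1 := hmub
      _ < x ^ n + n * ε := by linarith
      _ ≤ (x + ε) ^ n := aux_pow x ε hx hε.le n
    exact lt_of_pow_lt_pow_left₀ n (by linarith) hlt
  refine ⟨b, ?_, hb0, ?_, ?_⟩
  · rw [abs_sub_lt_iff]; constructor <;> linarith
  · refine ⟨Polynomial.X ^ n - Polynomial.C (m:ℤ), ?_, ?_⟩
    · exact Polynomial.monic_X_pow_sub_C _ hn0
    · simp [hbn]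
  · intro z hz
    have hq0 : Polynomial.aeval b ((Polynomial.X : Polynomial ℚ) ^ n
        - Polynomial.C (m:ℚ)) = 0 := by simp [hbn]
    have hdvd := minpoly.dvd ℚ b hq0
    obtain ⟨r, hr⟩ := Polynomial.map_dvd (algebraMap ℚ ℂ) hdvd
    have hz0 : Polynomial.IsRoot _ z := Polynomial.isRoot_of_mem_roots hz
    have hev : Polynomial.eval z
        (((Polynomial.X : Polynomial ℚ) ^ n - Polynomial.C (m:ℚ)).map
          (algebraMap ℚ ℂ)) = 0 := by
      rw [hr, Polynomial.eval_mul, hz0, zero_mul]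
    have hzn : z ^ n = (m:ℂ) := by
      simpa [sub_eq_zero] using hev
    have habs : ‖z‖ ^ n = b ^ n := by
      rw [← norm_pow, hzn, hbn]
      simp
    exact le_of_pow_le_pow_left₀ hn0 hb0 habs.le
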